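/- arXiv:2407.03680 — 4 statements merged into one kernel-verified Lean document; each statement's English description precedes it below -/
import Mathlib

section
/- Let $K$ be a $d$-simplex with vertices $V_0,\dots,V_d$ and barycentric coordinates $\lambda_0,\dots,\lambda_d$ (affine functions on $\mathbb{R}^d$ with $\lambda_i(V_j)=\delta_{ij}$ and $\sum_i \lambda_i = 1$). If $u = \sum_{|\alpha|=k} c_\alpha \prod_{i=0}^d \lambda_i^{\alpha_i}$ is a polynomial of degree $k$ and all derivatives $\nabla^n u|_{V_0} = 0$ for $0 \le n \le r$, then $c_\alpha = 0$ for every multi-index $\alpha$ with $\alpha_0 \ge k - r$. -/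
open MvPolynomial

/-- Iterated partial derivatives along a list of coordinate directions. -/
noncomputable def pderivs {d : ℕ} (l : List (Fin d)) (u : MvPolynomial (Fin d) ℝ) :
    MvPolynomial (Fin d) ℝ :=
  l.foldr (fun i p => MvPolynomial.pderiv i p) u

lemma coeff_pderiv' {d : ℕ} (i : Fin d) (δ : Fin d →₀ ℕ) (p : MvPolynomial (Fin d) ℝ) :
    coeff δ (pderiv i p) = ((δ i : ℝ) + 1) * coeff (δ + Finsupp.single i 1) p := by
  induction p using MvPolynomial.induction_on' with
  | add p q hp hq => simp [hp, hq, mul_add]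
  | monomial s a =>
    rw [pderiv_monomial, coeff_monomial, coeff_monomial]
    by_cases h : s = δ + Finsupp.single i 1
    · subst h
      rw [if_pos (add_tsub_cancel_right _ _), if_pos rfl, Finsupp.add_apply,
        Finsupp.single_eq_same]
      push_cast; ring
    · rw [if_neg h]
      split_ifs with h2
      · have hsi : s i = 0 := by
          by_contra hne
          apply h
          have hle : Finsupp.single i 1 ≤ s := by
            rw [Finsupp.single_le_iff]; omega
          rw [← h2]
          exact (tsub_add_cancel_of_le hle).symm
        simp [hsi]
      · ring

lemma pderivs_coeff {d : ℕ} : ∀ (l : List (Fin d)) (δ : Fin d →₀ ℕ),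
    ∃ cst : ℝ, 0 < cst ∧ ∀ p : MvPolynomial (Fin d) ℝ,
      coeff δ (pderivs l p) = cst * coeff (δ + Multiset.toFinsupp (↑l : Multiset (Fin d))) p
  | [], δ => ⟨1, one_pos, fun p => by simp [pderivs]⟩
  | i :: t, δ => by
      obtain ⟨c', hc', h'⟩ := pderivs_coeff t (δ + Finsupp.single i 1)
      refine ⟨((δ i : ℝ) + 1) * c', by positivity, fun p => ?_⟩
      have h1 : pderivs (i :: t) p = pderiv i (pderivs t p) := rfl
      rw [h1, coeff_pderiv', h' p]
      have h2 : Multiset.toFinsupp (↑(i :: t) : Multiset (Fin d))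
          = Finsupp.single i 1 + Multiset.toFinsupp (↑t : Multiset (Fin d)) := by
        have : (↑(i :: t) : Multiset (Fin d)) = {i} + ↑t := by
          simp [Multiset.singleton_add]
        rw [this, map_add, Multiset.toFinsupp_singleton]
      rw [h2]
      ring_nf
      rw [add_assoc]

lemma sum_le_one_classify {d : ℕ} (m : Fin d →₀ ℕ) (hm : (m.sum fun _ n => n) ≤ 1) :
    m = 0 ∨ ∃ j, m = Finsupp.single j 1 := by
  by_cases hz : m = 0
  · exact Or.inl hz
  · right
    obtain ⟨j, hj⟩ : ∃ j, m j ≠ 0 := by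
      by_contra hc
      push_neg at hc
      exact hz (Finsupp.ext fun a => hc a)
    refine ⟨j, Finsupp.ext fun a => ?_⟩
    have hsum : ∑ a ∈ m.support, m a ≤ 1 := by
      rwa [Finsupp.sum] at hm
    have hjs : j ∈ m.support := Finsupp.mem_support_iff.2 hj
    have hmj : m j ≤ 1 := le_trans (Finset.single_le_sum (fun _ _ => Nat.zero_le _) hjs) hsum
    by_cases haj : a = j
    · subst haj
      simp only [Finsupp.single_eq_same]
      omega
    · rw [Finsupp.single_eq_of_ne' (Ne.symm haj)]
      by_contra hca
      have has : a ∈ m.support := Finsupp.mem_support_iff.2 hca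
      have hpair : ({a, j} : Finset (Fin d)) ⊆ m.support := by
        intro x hx
        rcases Finset.mem_insert.1 hx with rfl | hx
        · exact has
        · rwa [Finset.mem_singleton.1 hx]
      have h2 : m a + m j ≤ ∑ x ∈ m.support, m x := by
        have := Finset.sum_le_sum_of_subset (f := fun x => m x) hpair
        rwa [Finset.sum_pair haj] at this
      omega

lemma deg1_repr {d : ℕ} (p : MvPolynomial (Fin d) ℝ) (hp : p.totalDegree ≤ 1) :
    p = C (coeff 0 p) + ∑ j, C (coeff (Finsupp.single j 1) p) * X j := by
  apply MvPolynomial.ext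
  intro m
  rw [coeff_add, coeff_C, coeff_sum]
  have hX : ∀ j : Fin d, coeff m (C (coeff (Finsupp.single j 1) p) * X j)
      = if Finsupp.single j 1 = m then coeff (Finsupp.single j 1) p else 0 := by
    intro j
    rw [coeff_C_mul, coeff_X']
    split_ifs <;> simp
  simp only [hX]
  by_cases h0 : m = 0
  · subst h0
    rw [if_pos rfl]
    have : ∀ j : Fin d, (if Finsupp.single j 1 = (0 : Fin d →₀ ℕ) then
        coeff (Finsupp.single j 1) p else 0) = 0 := by
      intro j
      rw [if_neg (fun h => one_ne_zero (Finsupp.single_eq_zero.1 h))]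
    rw [Finset.sum_congr rfl fun j _ => this j]
    simp
  by_cases h1 : ∃ j, m = Finsupp.single j 1
  · obtain ⟨j, rfl⟩ := h1
    rw [if_neg (fun h => h0 h.symm)]
    have hc : ∀ j' : Fin d, (if Finsupp.single j' 1 = Finsupp.single j 1 then
        coeff (Finsupp.single j' 1) p else 0)
        = if j' = j then coeff (Finsupp.single j' 1) p else 0 := by
      intro j'
      simp only [Finsupp.single_left_inj one_ne_zero]
    rw [Finset.sum_congr rfl fun j' _ => hc j', Finset.sum_ite_eq' Finset.univ j
      (fun j' => coeff (Finsupp.single j' 1) p)]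
    simp
  · have hcm : coeff m p = 0 := by
      by_contra hc
      have hmem : m ∈ p.support := MvPolynomial.mem_support_iff.2 hc
      have := le_trans (le_totalDegree hmem) hp
      rcases sum_le_one_classify m this with h | ⟨j, hj⟩
      · exact h0 h
      · exact h1 ⟨j, hj⟩
    rw [hcm, if_neg (fun h => h0 h.symm)]
    have : ∀ j : Fin d, (if Finsupp.single j 1 = m then
        coeff (Finsupp.single j 1) p else 0) = 0 := by
      intro j
      rw [if_neg (fun h => h1 ⟨j, h.symm⟩)]
    rw [Finset.sum_congr rfl fun j _ => this j]
    simp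

lemma eval_aeval' {d : ℕ} (y : Fin d → ℝ) (g : Fin d → MvPolynomial (Fin d) ℝ)
    (p : MvPolynomial (Fin d) ℝ) :
    eval y (aeval g p) = eval (fun j => eval y (g j)) p := by
  induction p using MvPolynomial.induction_on with
  | C a => simp
  | add p q hp hq => simp [← aeval_eq_bind₁, hp, hq]
  | mul_X p i hp => simp [← aeval_eq_bind₁, hp]

-- chain rule for degree-1 substitutions g j = C (b j) + ∑ i, C (w i j) * X i
lemma pderiv_aeval_lin {d : ℕ} (b : Fin d → ℝ) (w : Fin d → Fin d → ℝ)
    (g : Fin d → MvPolynomial (Fin d) ℝ)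
    (hgdef : ∀ j, g j = C (b j) + ∑ i, C (w i j) * X i)
    (m : Fin d) (p : MvPolynomial (Fin d) ℝ) :
    pderiv m (aeval g p) = ∑ j, C (w m j) * aeval g (pderiv j p) := by
  have hgd : ∀ s, pderiv m (g s) = C (w m s) := by
    intro s
    rw [hgdef s]
    rw [map_add, pderiv_C, zero_add]
    rw [map_sum]
    have : ∀ i : Fin d, pderiv m (C (w i s) * X i) = if i = m then C (w i s) else 0 := by
      intro i
      rw [pderiv_C_mul, pderiv_X]
      split_ifs with h
      · subst h; simp [Pi.single_eq_same]
      · simp [Pi.single_eq_of_ne h]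
    rw [Finset.sum_congr rfl fun i _ => this i, Finset.sum_ite_eq' Finset.univ m]
    simp
  induction p using MvPolynomial.induction_on with
  | C a => simp
  | add p q hp hq =>
    simp only [map_add, hp, hq, mul_add, ← Finset.sum_add_distrib]
  | mul_X p s hp =>
    rw [map_mul, aeval_X, pderiv_mul, hp, hgd s]
    have : ∀ j : Fin d, C (w m j) * aeval g (pderiv j (p * X s))
        = C (w m j) * aeval g (pderiv j p) * g s
          + (if j = s then C (w m j) * aeval g p else 0) := by
      intro j
      rw [pderiv_mul, pderiv_X, map_add, map_mul, map_mul, aeval_X]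
      split_ifs with h
      · subst h; simp [Pi.single_eq_same]; ring
      · simp [← aeval_eq_bind₁, Pi.single_eq_of_ne (Ne.symm h)]
        ring
    rw [Finset.sum_congr rfl fun j _ => this j, Finset.sum_add_distrib,
      Finset.sum_ite_eq' Finset.univ s]
    simp [Finset.sum_mul]
    ring


/-- if all derivatives of `u` of order `≤ r` vanish at the vertex `V 0`,
then every coefficient `c α` with `α 0 ≥ k - r` in the barycentric representation
`u = ∑ c α • ∏ λᵢ^{αᵢ}` vanishes. -/
theorem stmt0 (d k r : ℕ) (hrk : r ≤ k)
    (V : Fin (d + 1) → (Fin d → ℝ)) (hV : AffineIndependent ℝ V)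
    (lam : Fin (d + 1) → MvPolynomial (Fin d) ℝ)
    (hdeg : ∀ i, (lam i).totalDegree ≤ 1)
    (hval : ∀ i j, MvPolynomial.eval (V j) (lam i) = if i = j then 1 else 0)
    (hsum : ∑ i, lam i = 1)
    (S : Finset (Fin (d + 1) → ℕ)) (hS : ∀ α ∈ S, ∑ i, α i = k)
    (c : (Fin (d + 1) → ℕ) → ℝ)
    (u : MvPolynomial (Fin d) ℝ)
    (hu : u = ∑ α ∈ S, c α • ∏ i, lam i ^ α i)
    (hvanish : ∀ l : List (Fin d), l.length ≤ r →
      MvPolynomial.eval (V 0) (pderivs l u) = 0) :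
    ∀ α ∈ S, k - r ≤ α 0 → c α = 0 := by
  classical
  set w : Fin d → Fin d → ℝ := fun i j => V i.succ j - V 0 j with hw
  set g : Fin d → MvPolynomial (Fin d) ℝ :=
    fun j => C (V 0 j) + ∑ i, C (w i j) * X i with hgdef
  have hevalpt : ∀ (i : Fin (d+1)) (P : Fin d → ℝ),
      eval P (lam i) = coeff 0 (lam i) + ∑ j, coeff (Finsupp.single j 1) (lam i) * P j := by
    intro i P
    conv_lhs => rw [deg1_repr (lam i) (hdeg i)]
    simp
  -- Step A : aeval g (lam i.succ) = X i
  have hA : ∀ i : Fin d, aeval g (lam i.succ) = X i := by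
    intro i
    apply MvPolynomial.funext
    intro y
    rw [eval_aeval', eval_X]
    set a0 := coeff 0 (lam i.succ) with ha0
    set a : Fin d → ℝ := fun j => coeff (Finsupp.single j 1) (lam i.succ) with ha
    have hz : ∀ j, eval y (g j) = V 0 j + ∑ t, w t j * y t := by
      intro j
      rw [hgdef]
      simp
    have h0 : a0 + ∑ j, a j * V 0 j = 0 := by
      have h := hval i.succ 0
      rw [hevalpt, if_neg (Fin.succ_ne_zero i)] at h
      exact h
    have ht : ∀ t : Fin d, a0 + ∑ j, a j * V t.succ j = if i = t then 1 else 0 := by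
      intro t
      have h := hval i.succ t.succ
      rw [hevalpt] at h
      simpa [Fin.succ_inj] using h
    have hfun : (fun j => eval y (g j)) = fun j => V 0 j + ∑ t, w t j * y t :=
      funext hz
    rw [hfun, hevalpt]
    have expand : ∑ j, a j * (V 0 j + ∑ t, w t j * y t)
        = (∑ j, a j * V 0 j) + ∑ t, (∑ j, a j * w t j) * y t := by
      simp only [mul_add, Finset.mul_sum]
      rw [Finset.sum_add_distrib]
      congr 1
      rw [Finset.sum_comm]
      apply Finset.sum_congr rfl
      intro t _
      rw [Finset.sum_mul]
      apply Finset.sum_congr rfl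
      intro j _
      ring
    have hwsum : ∀ t, ∑ j, a j * w t j = if i = t then 1 else 0 := by
      intro t
      have hsub : ∑ j, a j * w t j
          = (a0 + ∑ j, a j * V t.succ j) - (a0 + ∑ j, a j * V 0 j) := by
        have h1 : ∀ j : Fin d, a j * w t j = a j * V t.succ j - a j * V 0 j := by
          intro j
          simp only [hw]
          ring
        rw [Finset.sum_congr rfl fun j _ => h1 j, Finset.sum_sub_distrib]
        ring
      rw [hsub, ht t, h0, sub_zero]
    rw [expand, ← add_assoc, h0, zero_add]
    rw [Finset.sum_congr rfl fun t (_ : t ∈ Finset.univ) => by rw [hwsum t]]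
    simp [ite_mul]
  -- Step A0
  have hA0 : aeval g (lam 0) = 1 - ∑ i : Fin d, X i := by
    have hl0 : lam 0 = 1 - ∑ i : Fin d, lam i.succ := by
      have h := hsum
      rw [Fin.sum_univ_succ] at h
      rw [eq_sub_iff_add_eq, h]
    rw [hl0, map_sub, map_one, map_sum]
    congr 1
    apply Finset.sum_congr rfl
    intro i _
    rw [hA i]
  -- q = aeval g u explicit form
  have hq : aeval g u = ∑ α ∈ S, c α •
      ((1 - ∑ i : Fin d, X i) ^ (α 0)
        * ∏ i : Fin d, (X i : MvPolynomial (Fin d) ℝ) ^ (α i.succ)) := by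
    rw [hu, map_sum]
    apply Finset.sum_congr rfl
    intro α _
    rw [map_smul]
    congr 1
    rw [map_prod, Fin.prod_univ_succ, map_pow, hA0]
    congr 1
    apply Finset.prod_congr rfl
    intro i _
    rw [map_pow, hA i]
  -- span argument
  have hmem : ∀ l : List (Fin d), pderivs l (aeval g u) ∈
      Submodule.span ℝ {x : MvPolynomial (Fin d) ℝ |
        ∃ l' : List (Fin d), l'.length = l.length ∧ x = aeval g (pderivs l' u)} := by
    intro l
    induction l with
    | nil => exact Submodule.subset_span ⟨[], rfl, rfl⟩
    | cons j t ih =>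
      have hstep : pderivs (j :: t) (aeval g u) = pderiv j (pderivs t (aeval g u)) := rfl
      rw [hstep]
      set D : MvPolynomial (Fin d) ℝ →ₗ[ℝ] MvPolynomial (Fin d) ℝ :=
        (pderiv j).toLinearMap with hD
      have hmap : D (pderivs t (aeval g u)) ∈
          Submodule.map D
            (Submodule.span ℝ {x : MvPolynomial (Fin d) ℝ |
              ∃ l' : List (Fin d), l'.length = t.length ∧ x = aeval g (pderivs l' u)}) :=
        Submodule.mem_map_of_mem ih
      rw [Submodule.map_span] at hmap
      have hDx : D (pderivs t (aeval g u)) = pderiv j (pderivs t (aeval g u)) := rfl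
      rw [hDx] at hmap
      refine Submodule.span_le.2 ?_ hmap
      rintro x ⟨y, ⟨l', hl', rfl⟩, rfl⟩
      have hchain : pderiv j (aeval g (pderivs l' u))
          = ∑ i, C (w j i) * aeval g (pderiv i (pderivs l' u)) :=
        pderiv_aeval_lin (fun j => V 0 j) w g (fun j => rfl) j _
      show D (aeval g (pderivs l' u)) ∈ _
      have hDy : D (aeval g (pderivs l' u)) = pderiv j (aeval g (pderivs l' u)) := rfl
      rw [hDy, hchain]
      apply Submodule.sum_mem
      intro i _
      rw [← MvPolynomial.smul_eq_C_mul]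
      exact Submodule.smul_mem _ _ (Submodule.subset_span
        ⟨i :: l', by simp [hl'], rfl⟩)
  have hkey : ∀ l : List (Fin d), l.length ≤ r →
      eval (0 : Fin d → ℝ) (pderivs l (aeval g u)) = 0 := by
    intro l hl
    refine Submodule.span_induction ?_ ?_ ?_ ?_ (hmem l)
    · rintro x ⟨l', hl', rfl⟩
      rw [eval_aeval']
      have hfun : (fun j => eval (0 : Fin d → ℝ) (g j)) = V 0 := by
        funext j
        rw [hgdef]
        simp
      rw [hfun]
      exact hvanish l' (by omega)
    · simp
    · intro x y _ _ hx hy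
      rw [map_add, hx, hy, add_zero]
    · intro a x _ hx
      rw [MvPolynomial.smul_eq_C_mul, map_mul, eval_C, hx, mul_zero]
  -- coefficients of q vanish up to degree r
  have hcoeffq : ∀ γ : Fin d →₀ ℕ, (γ.sum fun _ n => n) ≤ r →
      coeff γ (aeval g u) = 0 := by
    intro γ hγ
    set l := (Finsupp.toMultiset γ).toList with hldef
    have hms : (↑l : Multiset (Fin d)) = Finsupp.toMultiset γ := Multiset.coe_toList _
    have hlen : l.length ≤ r := by
      have h1 : l.length = Multiset.card (Finsupp.toMultiset γ) := by
        rw [← hms]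
        simp
      rw [h1, Finsupp.card_toMultiset]
      exact hγ
    obtain ⟨cst, hcst, hF⟩ := pderivs_coeff l 0
    have h0 : coeff 0 (pderivs l (aeval g u)) = 0 := by
      have h := hkey l hlen
      rwa [eval_zero, constantCoeff_eq] at h
    rw [hF] at h0
    rw [hms, Finsupp.toMultiset_toFinsupp, zero_add] at h0
    exact (mul_eq_zero.1 h0).resolve_left (ne_of_gt hcst)
  -- final extraction
  set γf : (Fin (d+1) → ℕ) → (Fin d →₀ ℕ) :=
    fun β => Finsupp.equivFunOnFinite.symm (fun i => β i.succ) with hγf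
  have hγapp : ∀ β i, γf β i = β i.succ := by
    intro β i
    rw [hγf]
    rfl
  have hγsum : ∀ β : Fin (d+1) → ℕ, ((γf β).sum fun _ n => n) = ∑ i : Fin d, β i.succ := by
    intro β
    rw [Finsupp.sum_fintype _ _ (fun _ => rfl)]
    exact Finset.sum_congr rfl fun i _ => hγapp β i
  have hmon : ∀ β : Fin (d+1) → ℕ,
      (∏ i : Fin d, (X i : MvPolynomial (Fin d) ℝ) ^ (β i.succ)) = monomial (γf β) 1 := by
    intro β
    calc ∏ i : Fin d, (X i : MvPolynomial (Fin d) ℝ) ^ (β i.succ)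
        = ∏ i : Fin d, (X i : MvPolynomial (Fin d) ℝ) ^ ((γf β) i) :=
          Finset.prod_congr rfl fun i _ =>
            congrArg (fun n => (X i : MvPolynomial (Fin d) ℝ) ^ n) (hγapp β i).symm
      _ = ∏ i ∈ (γf β).support, (X i : MvPolynomial (Fin d) ℝ) ^ ((γf β) i) :=
          (Finset.prod_subset (Finset.subset_univ _)
            (fun i _ hi => by rw [Finsupp.notMem_support_iff.1 hi, pow_zero])).symm
      _ = monomial (γf β) 1 := prod_X_pow_eq_monomial
  have hconst : ∀ n : ℕ, coeff 0 ((1 - ∑ i : Fin d, X i : MvPolynomial (Fin d) ℝ) ^ n) = 1 := by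
    intro n
    rw [← constantCoeff_eq]
    rw [map_pow, map_sub, map_one, map_sum]
    simp
  have main : ∀ m : ℕ, m ≤ r → ∀ α ∈ S, k - α 0 ≤ m → c α = 0 := by
    intro m
    induction m using Nat.strong_induction_on with
    | _ m ih =>
      intro hmr α hαS hα
      by_cases hlt : k - α 0 < m
      · exact ih (k - α 0) hlt (by omega) α hαS le_rfl
      have hm : k - α 0 = m := by omega
      have hsum_α : α 0 + ∑ i : Fin d, α i.succ = k := by
        have h := hS α hαS
        rwa [Fin.sum_univ_succ] at h
      have hγαsum : ((γf α).sum fun _ n => n) = m := by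
        rw [hγsum]
        omega
      have h0 : coeff (γf α) (aeval g u) = 0 := hcoeffq _ (by omega)
      rw [hq, coeff_sum] at h0
      have hterm : ∀ β ∈ S, β ≠ α →
          coeff (γf α) (c β • ((1 - ∑ i : Fin d, X i) ^ (β 0)
            * ∏ i : Fin d, (X i : MvPolynomial (Fin d) ℝ) ^ (β i.succ))) = 0 := by
        intro β hβS hβα
        rw [coeff_smul, hmon β, coeff_mul_monomial']
        by_cases hle : γf β ≤ γf α
        · rw [if_pos hle]
          have hsum_β : β 0 + ∑ i : Fin d, β i.succ = k := by
            have h := hS β hβS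
            rwa [Fin.sum_univ_succ] at h
          by_cases heq : γf β = γf α
          · exfalso
            apply hβα
            funext x
            induction x using Fin.cases with
            | zero =>
              have hs : ∑ i : Fin d, β i.succ = ∑ i : Fin d, α i.succ := by
                apply Finset.sum_congr rfl
                intro i _
                rw [← hγapp β, ← hγapp α, heq]
              omega
            | succ i =>
              rw [← hγapp β, ← hγapp α, heq]
          · have hltsum : ∑ i : Fin d, β i.succ < ∑ i : Fin d, α i.succ := by
              have hle' : ∀ i : Fin d, β i.succ ≤ α i.succ := by
                intro i
                rw [← hγapp β, ← hγapp α]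
                exact hle i
              have hex : ∃ i : Fin d, β i.succ < α i.succ := by
                by_contra hc
                push_neg at hc
                apply heq
                apply Finsupp.ext
                intro i
                rw [hγapp β, hγapp α]
                exact le_antisymm (hle' i) (hc i)
              obtain ⟨i0, hi0⟩ := hex
              exact Finset.sum_lt_sum (fun i _ => hle' i) ⟨i0, Finset.mem_univ i0, hi0⟩
            have hβ0 : k - β 0 < m := by omega
            rw [ih (k - β 0) hβ0 (by omega) β hβS le_rfl]
            simp
        · rw [if_neg hle]
          simp
      rw [Finset.sum_eq_single_of_mem α hαS (fun β hβ hne => hterm β hβ hne)] at h0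
      rw [coeff_smul, hmon α, coeff_mul_monomial', if_pos le_rfl, tsub_self, hconst] at h0
      simpa using h0
  intro α hαS hge
  exact main (k - α 0) (by omega) α hαS le_rfl
end

section
/- Let $\gamma, \overline{\alpha} \in \mathbb{N}_0^d$ be multi-indices and $\alpha_0 \in \mathbb{N}_0$. Define $\Lambda^{\overline{\alpha}} = \prod_{i=1}^d \lambda_i^{\alpha_i}/\alpha_i!$ and $\Lambda_0^{\alpha_0} = \lambda_0^{\alpha_0}/\alpha_0!$, where $\lambda_0,\dots,\lambda_d$ are barycentric coordinates of a $d$-simplex, and let $\overline{D}^\gamma$ denote the mixed directional derivative of order $\gamma$ along the edge vectors $\bm{t}_i = V_i - V_0$. Then $\overline{D}^\gamma(\Lambda^{\overline{\alpha}} \Lambda_0^{\alpha_0}) = \sum_{\gamma' \le \gamma} (-1)^{|\gamma| - |\gamma'|} \binom{\gamma}{\gamma'} \Lambda^{\overline{\alpha} - \gamma'} \Lambda_0^{\alpha_0 - |\gamma| + |\gamma'|}$, with the convention that a term is zero whenever any exponent would be negative. -/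
open MvPolynomial

/-- Directional derivative of a polynomial along the vector `v`. -/
noncomputable def dirDeriv {d : ℕ} (v : Fin d → ℝ) :
    Module.End ℝ (MvPolynomial (Fin d) ℝ) :=
  ∑ j, v j • (MvPolynomial.pderiv j).toLinearMap

/-- Mixed directional derivative `D̄^γ = ∏ᵢ (∂/∂tᵢ)^{γᵢ}`. -/
noncomputable def Dbar {d : ℕ} (t : Fin d → (Fin d → ℝ)) (γ : Fin d → ℕ) :
    Module.End ℝ (MvPolynomial (Fin d) ℝ) :=
  ((List.finRange d).map fun i => (dirDeriv (t i)) ^ (γ i)).prod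

/-- Normalized barycentric monomial `Λ^ᾱ = ∏ᵢ λᵢ^{αᵢ}/αᵢ!`, with integer exponents,
equal to `0` by convention if some exponent is negative. -/
noncomputable def LamI {d : ℕ} (lam : Fin d → MvPolynomial (Fin d) ℝ) (a : Fin d → ℤ) :
    MvPolynomial (Fin d) ℝ :=
  if ∀ i, 0 ≤ a i then
    (((∏ i, ((a i).toNat).factorial : ℕ) : ℝ))⁻¹ • ∏ i, lam i ^ (a i).toNat
  else 0

/-- `Λ₀^{α₀} = λ₀^{α₀}/α₀!`, with integer exponent, `0` by convention if negative. -/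
noncomputable def Lam0I {d : ℕ} (lam0 : MvPolynomial (Fin d) ℝ) (a : ℤ) :
    MvPolynomial (Fin d) ℝ :=
  if 0 ≤ a then ((a.toNat.factorial : ℕ) : ℝ)⁻¹ • lam0 ^ a.toNat else 0

section Aux

variable {d : ℕ}

lemma dirDeriv_apply (v : Fin d → ℝ) (p : MvPolynomial (Fin d) ℝ) :
    dirDeriv v p = ∑ j, v j • MvPolynomial.pderiv j p := by
  simp [dirDeriv]

lemma dirDeriv_mul (v : Fin d → ℝ) (p q : MvPolynomial (Fin d) ℝ) :
    dirDeriv v (p * q) = dirDeriv v p * q + p * dirDeriv v q := by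
  simp only [dirDeriv_apply, pderiv_mul, smul_add, Finset.sum_add_distrib,
    Finset.sum_mul, Finset.mul_sum, smul_mul_assoc, mul_smul_comm]

lemma dirDeriv_pow (v : Fin d → ℝ) (p : MvPolynomial (Fin d) ℝ) (n : ℕ) :
    dirDeriv v (p ^ n) = (n : ℝ) • (p ^ (n - 1) * dirDeriv v p) := by
  simp only [dirDeriv_apply, Derivation.leibniz_pow, Finset.mul_sum, Finset.smul_sum]
  refine Finset.sum_congr rfl fun j _ => ?_
  rw [← Nat.cast_smul_eq_nsmul ℝ (n) ]
  simp only [smul_smul, smul_eq_mul, mul_smul_comm, smul_mul_assoc]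
  ring_nf

variable (t : Fin d → (Fin d → ℝ)) (lam : Fin d → MvPolynomial (Fin d) ℝ)
  (lam0 : MvPolynomial (Fin d) ℝ)
  (hlam : ∀ i j, dirDeriv (t j) (lam i) = MvPolynomial.C (if i = j then (1 : ℝ) else 0))
  (hlam0 : ∀ j, dirDeriv (t j) lam0 = MvPolynomial.C (-1 : ℝ))

include hlam in
lemma dd_prod_pow (j : Fin d) (n : Fin d → ℕ) (s : Finset (Fin d)) :
    dirDeriv (t j) (∏ i ∈ s, lam i ^ n i) =
      if j ∈ s then (n j : ℝ) • (lam j ^ (n j - 1) * ∏ i ∈ s.erase j, lam i ^ n i)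
      else 0 := by
  induction s using Finset.induction_on with
  | empty => simp [dirDeriv_apply]
  | @insert k s hk ih =>
    rw [Finset.prod_insert hk, dirDeriv_mul, dirDeriv_pow, hlam, ih]
    by_cases hjk : j = k
    · subst hjk
      have hjs : j ∉ s := hk
      simp only [if_pos rfl, if_pos (Finset.mem_insert_self j s), if_neg hjs,
        Finset.erase_insert hjs]
      simp [MvPolynomial.C_1, smul_mul_assoc]
    · have h1 : (if k = j then (1:ℝ) else 0) = 0 := by simp [Ne.symm hjk]
      rw [h1]
      simp only [map_zero, mul_zero, smul_zero, zero_mul, zero_add]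
      by_cases hjs : j ∈ s
      · rw [if_pos hjs, if_pos (Finset.mem_insert_of_mem hjs),
          Finset.erase_insert_of_ne (Ne.symm hjk), Finset.prod_insert (by simp [hk])]
        rw [mul_smul_comm]
        congr 1
        ring
      · rw [if_neg hjs, if_neg (by simp [hjk, hjs]), mul_zero]

include hlam in
lemma dd_LamI (j : Fin d) (a : Fin d → ℤ) :
    dirDeriv (t j) (LamI lam a) = LamI lam (a - Pi.single j 1) := by
  by_cases ha : ∀ i, 0 ≤ a i
  · by_cases haj : a j = 0
    · have h1 : ¬ ∀ i, 0 ≤ (a - Pi.single j 1 : Fin d → ℤ) i := by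
        intro h; have := h j; simp [haj] at this
      rw [LamI, if_pos ha, LamI, if_neg h1, map_smul, dd_prod_pow t lam hlam,
        if_pos (Finset.mem_univ j)]
      simp [haj]
    · have haj' : 1 ≤ a j := lt_of_le_of_ne (ha j) (Ne.symm haj)
      have h1 : ∀ i, 0 ≤ (a - Pi.single j 1 : Fin d → ℤ) i := by
        intro i
        by_cases hij : i = j
        · subst hij; simp; omega
        · simp [Pi.single_apply, hij]; exact ha i
      rw [LamI, if_pos ha, LamI, if_pos h1, map_smul, dd_prod_pow t lam hlam,
        if_pos (Finset.mem_univ j)]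
      set m := (a j).toNat with hm
      have hm1 : 1 ≤ m := by omega
      have hexp : ∀ i, ((a - Pi.single j 1 : Fin d → ℤ) i).toNat =
          if i = j then m - 1 else (a i).toNat := by
        intro i
        by_cases hij : i = j
        · subst hij; simp [hm]
        · simp [Pi.single_apply, hij]
      -- products
      have hprod : (∏ i, lam i ^ ((a - Pi.single j 1 : Fin d → ℤ) i).toNat)
          = lam j ^ (m - 1) * ∏ i ∈ Finset.univ.erase j, lam i ^ (a i).toNat := by
        rw [← Finset.mul_prod_erase Finset.univ _ (Finset.mem_univ j), hexp j, if_pos rfl]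
        congr 1
        refine Finset.prod_congr rfl fun i hi => ?_
        rw [hexp i, if_neg (Finset.ne_of_mem_erase hi)]
      have hfact : (∏ i, (((a - Pi.single j 1 : Fin d → ℤ) i).toNat).factorial)
          = (m-1).factorial * ∏ i ∈ Finset.univ.erase j, ((a i).toNat).factorial := by
        rw [← Finset.mul_prod_erase Finset.univ _ (Finset.mem_univ j), hexp j, if_pos rfl]
        congr 1
        refine Finset.prod_congr rfl fun i hi => ?_
        rw [hexp i, if_neg (Finset.ne_of_mem_erase hi)]
      have hfact2 : (∏ i, ((a i).toNat).factorial)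
          = m.factorial * ∏ i ∈ Finset.univ.erase j, ((a i).toNat).factorial := by
        rw [← Finset.mul_prod_erase Finset.univ _ (Finset.mem_univ j)]
      rw [hprod, hfact, hfact2]
      rw [smul_smul]
      congr 1
      have h3 : (m.factorial : ℝ) = m * (m-1).factorial := by
        exact_mod_cast (Nat.mul_factorial_pred (by omega)).symm
      have h4 : ((m-1).factorial : ℝ) ≠ 0 := by positivity
      have h5 : ((∏ i ∈ Finset.univ.erase j, ((a i).toNat).factorial : ℕ) : ℝ) ≠ 0 := by
        positivity
      push_cast
      rw [h3]
      field_simp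
  · have h1 : ¬ ∀ i, 0 ≤ (a - Pi.single j 1 : Fin d → ℤ) i := by
      intro h
      apply ha
      intro i
      have := h i
      by_cases hij : i = j
      · subst hij; simp at this; omega
      · simpa [Pi.single_apply, hij] using this
    rw [LamI, if_neg ha, LamI, if_neg h1, map_zero]

include hlam0 in
lemma dd_Lam0I (j : Fin d) (b : ℤ) :
    dirDeriv (t j) (Lam0I lam0 b) = - Lam0I lam0 (b - 1) := by
  by_cases hb : 0 ≤ b
  · by_cases hb0 : b = 0
    · subst hb0
      rw [Lam0I, if_pos le_rfl, Lam0I, if_neg (by omega), map_smul, dirDeriv_pow]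
      simp
    · have hb1 : 0 ≤ b - 1 := by omega
      rw [Lam0I, if_pos hb, Lam0I, if_pos hb1, map_smul, dirDeriv_pow, hlam0]
      have h1 : (b - 1).toNat = b.toNat - 1 := by omega
      have h2 : (b.toNat : ℝ) ≠ 0 := by
        have : 1 ≤ b.toNat := by omega
        positivity
      have h3 : (b.toNat.factorial : ℝ) = b.toNat * (b.toNat - 1).factorial := by
        exact_mod_cast (Nat.mul_factorial_pred (by omega)).symm
      have hC : lam0 ^ (b.toNat - 1) * MvPolynomial.C (-1:ℝ) = -(lam0 ^ (b.toNat-1)) := by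
        simp [mul_comm]
      rw [h1, smul_smul, hC, smul_neg]
      rw [neg_inj]
      congr 1
      rw [h3]
      field_simp
  · rw [Lam0I, if_neg hb, Lam0I, if_neg (by omega), map_zero, neg_zero]

include hlam hlam0 in
lemma dd_G (j : Fin d) (a : Fin d → ℤ) (b : ℤ) :
    dirDeriv (t j) (LamI lam a * Lam0I lam0 b) =
      LamI lam (a - Pi.single j 1) * Lam0I lam0 b - LamI lam a * Lam0I lam0 (b - 1) := by
  rw [dirDeriv_mul, dd_LamI t lam hlam, dd_Lam0I t lam0 hlam0]
  ring

/-- The commutative algebra of formal shift operators. -/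
noncomputable abbrev AA (d : ℕ) : Type := AddMonoidAlgebra ℝ ((Fin d → ℤ) × ℤ)

noncomputable def Phi : AA d →ₗ[ℝ] MvPolynomial (Fin d) ℝ :=
  Finsupp.lift (MvPolynomial (Fin d) ℝ) ℝ ((Fin d → ℤ) × ℤ)
    (fun p => LamI lam p.1 * Lam0I lam0 p.2) ∘ₗ
    (AddMonoidAlgebra.coeffLinearEquiv ℝ : AA d ≃ₗ[ℝ] _).toLinearMap

lemma Phi_single (p : (Fin d → ℤ) × ℤ) (c : ℝ) :
    Phi lam lam0 (AddMonoidAlgebra.single p c) = c • (LamI lam p.1 * Lam0I lam0 p.2) := by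
  rw [Phi, LinearMap.comp_apply]
  erw [Finsupp.lift_apply]
  exact Finsupp.sum_single_index (by simp)

noncomputable def uu (j : Fin d) : AA d :=
  AddMonoidAlgebra.single (-(Pi.single j 1 : Fin d → ℤ), (0:ℤ)) 1

noncomputable def ww : AA d :=
  AddMonoidAlgebra.single ((0 : Fin d → ℤ), (-1:ℤ)) 1

include hlam hlam0 in
lemma key_comm (j : Fin d) (x : AA d) :
    dirDeriv (t j) (Phi lam lam0 x) = Phi lam lam0 ((uu j - ww) * x) := by
  induction x using AddMonoidAlgebra.induction_linear with
  | zero => simp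
  | add f g hf hg => rw [map_add, map_add, mul_add, map_add, hf, hg]
  | single p c =>
    obtain ⟨p1, p2⟩ := p
    have hs : (AddMonoidAlgebra.single (p1, p2) c : AA d) = AddMonoidAlgebra.single (p1, p2) c := rfl
    rw [hs, Phi_single, map_smul, dd_G t lam lam0 hlam hlam0, sub_mul]
    simp only [uu, ww]
    rw [AddMonoidAlgebra.single_mul_single, AddMonoidAlgebra.single_mul_single, map_sub,
      Phi_single, Phi_single]
    rw [show (-(Pi.single j 1 : Fin d → ℤ), (0:ℤ)) + (p1, p2) = (p1 - Pi.single j 1, p2) by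
        simp [Prod.mk_add_mk, neg_add_eq_sub],
      show ((0 : Fin d → ℤ), (-1:ℤ)) + (p1, p2) = (p1, p2 - 1) by
        simp [Prod.mk_add_mk, neg_add_eq_sub],
      one_mul, smul_sub]

include hlam hlam0 in
lemma pow_comm (j : Fin d) (n : ℕ) (x : AA d) :
    ((dirDeriv (t j)) ^ n) (Phi lam lam0 x) = Phi lam lam0 ((uu j - ww) ^ n * x) := by
  induction n generalizing x with
  | zero => simp
  | succ n ih =>
    rw [pow_succ, Module.End.mul_apply, key_comm t lam lam0 hlam hlam0, ih]
    congr 1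
    ring

include hlam hlam0 in
lemma list_comm (L : List (Fin d)) (γ : Fin d → ℕ) (x : AA d) :
    ((L.map fun i => dirDeriv (t i) ^ γ i).prod) (Phi lam lam0 x)
      = Phi lam lam0 (((L.map fun i => (uu i - ww (d := d)) ^ γ i).prod) * x) := by
  induction L with
  | nil => simp
  | cons i L ih =>
    rw [List.map_cons, List.prod_cons, Module.End.mul_apply, ih,
      pow_comm t lam lam0 hlam hlam0, List.map_cons, List.prod_cons, mul_assoc]

lemma A_sub_pow (x y : AA d) (n : ℕ) :
    (x - y) ^ n = ∑ k ∈ Finset.range (n + 1),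
      algebraMap ℝ (AA d) ((-1:ℝ) ^ (n - k) * ((n.choose k : ℕ) : ℝ)) *
        (x ^ k * y ^ (n - k)) := by
  rw [sub_pow]
  refine Finset.sum_congr rfl fun k hk => ?_
  have hk' : k ≤ n := by
    have := Finset.mem_range.mp hk; omega
  have hsign : ((-1 : AA d)) ^ (k + n) = (-1) ^ (n - k) := by
    rw [show k + n = (n - k) + 2 * k by omega, pow_add, pow_mul]
    simp
  rw [map_mul, map_pow, map_neg, map_one, map_natCast, hsign]
  ring

lemma uu_pow (j : Fin d) (k : ℕ) :
    uu j ^ k = AddMonoidAlgebra.single (-(Pi.single j (k : ℤ)), (0:ℤ)) 1 := by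
  rw [uu, AddMonoidAlgebra.single_pow, one_pow]
  congr 1
  refine Prod.ext ?_ ?_
  · show (k • (-(Pi.single j 1 : Fin d → ℤ), (0:ℤ))).1 = _
    rw [Prod.smul_fst]
    funext i
    by_cases h : i = j <;> simp [h, Pi.single_apply]
  · show (k • (-(Pi.single j 1 : Fin d → ℤ), (0:ℤ))).2 = _
    rw [Prod.smul_snd]
    simp

lemma ww_pow (m : ℕ) :
    (ww : AA d) ^ m = AddMonoidAlgebra.single ((0 : Fin d → ℤ), -(m : ℤ)) 1 := by
  rw [ww, AddMonoidAlgebra.single_pow, one_pow]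
  congr 1
  refine Prod.ext ?_ ?_
  · show (m • ((0 : Fin d → ℤ), (-1:ℤ))).1 = _
    rw [Prod.smul_fst]; simp
  · show (m • ((0 : Fin d → ℤ), (-1:ℤ))).2 = _
    rw [Prod.smul_snd]; simp

lemma prod_uu_pow (γ' : Fin d → ℕ) :
    (∏ j, uu j ^ γ' j : AA d)
      = AddMonoidAlgebra.single ((fun i => -(γ' i : ℤ)), (0:ℤ)) 1 := by
  calc (∏ j, uu j ^ γ' j : AA d)
      = ∏ j, AddMonoidAlgebra.single (-(Pi.single j (γ' j : ℤ)), (0:ℤ)) 1 :=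
        Finset.prod_congr rfl fun j _ => uu_pow j (γ' j)
    _ = AddMonoidAlgebra.single (∑ j, (-(Pi.single j (γ' j : ℤ)), (0:ℤ)))
          (∏ _j : Fin d, (1:ℝ)) := AddMonoidAlgebra.prod_single _ _ _
    _ = _ := by
        rw [Finset.prod_const_one]
        congr 1
        refine Prod.ext ?_ ?_
        · rw [Prod.fst_sum]
          simp only
          rw [Finset.sum_neg_distrib]
          rw [show (∑ j, Pi.single j (γ' j : ℤ)) = fun i => (γ' i : ℤ) from
            Finset.univ_sum_single _]
          funext i
          simp
        · rw [Prod.snd_sum]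
          simp

end Aux

/-- Leibniz-type expansion of `D̄^γ (Λ^ᾱ Λ₀^{α₀})`. -/
theorem stmt3 (d : ℕ)
    (t : Fin d → (Fin d → ℝ))
    (lam : Fin d → MvPolynomial (Fin d) ℝ) (lam0 : MvPolynomial (Fin d) ℝ)
    (hlam : ∀ i j, dirDeriv (t j) (lam i) = MvPolynomial.C (if i = j then (1 : ℝ) else 0))
    (hlam0 : ∀ j, dirDeriv (t j) lam0 = MvPolynomial.C (-1 : ℝ))
    (γ abar : Fin d → ℕ) (a0 : ℕ) :
    Dbar t γ (LamI lam (fun i => (abar i : ℤ)) * Lam0I lam0 (a0 : ℤ)) =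
      ∑ γ' ∈ Fintype.piFinset (fun i => Finset.range (γ i + 1)),
        (((-1 : ℝ) ^ (∑ i, γ i - ∑ i, γ' i)) * ∏ i, ((γ i).choose (γ' i) : ℝ)) •
          (LamI lam (fun i => (abar i : ℤ) - (γ' i : ℤ)) *
            Lam0I lam0 ((a0 : ℤ) - (∑ i, γ i : ℕ) + (∑ i, γ' i : ℕ))) := by
  classical
  have hstart : LamI lam (fun i => (abar i : ℤ)) * Lam0I lam0 (a0 : ℤ)
      = Phi lam lam0 (AddMonoidAlgebra.single ((fun i => (abar i : ℤ)), (a0:ℤ)) 1) := by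
    rw [Phi_single, one_smul]
  rw [hstart]
  rw [Dbar, list_comm t lam lam0 hlam hlam0, ← Fin.prod_univ_def]
  have hexp : (∏ j, (uu j - ww (d := d)) ^ γ j)
      = ∑ γ' ∈ Fintype.piFinset (fun i => Finset.range (γ i + 1)),
          ∏ j, algebraMap ℝ (AA d) ((-1:ℝ)^(γ j - γ' j) * (((γ j).choose (γ' j) : ℕ) : ℝ)) *
            (uu j ^ γ' j * ww (d := d) ^ (γ j - γ' j)) := by
    calc (∏ j, (uu j - ww (d := d)) ^ γ j)
        = ∏ j, ∑ k ∈ Finset.range (γ j + 1),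
            algebraMap ℝ (AA d) ((-1:ℝ)^(γ j - k) * (((γ j).choose k : ℕ) : ℝ)) *
              (uu j ^ k * ww (d := d) ^ (γ j - k)) :=
          Finset.prod_congr rfl fun j _ => A_sub_pow _ _ _
      _ = _ := Finset.prod_univ_sum _ _
  rw [hexp, Finset.sum_mul, map_sum]
  refine Finset.sum_congr rfl fun γ' hγ' => ?_
  have hle : ∀ j, γ' j ≤ γ j := by
    intro j
    have := (Fintype.mem_piFinset.mp hγ') j
    simp only [Finset.mem_range] at this
    omega
  have hsum : ∑ j, γ' j + ∑ j, (γ j - γ' j) = ∑ j, γ j := by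
    rw [← Finset.sum_add_distrib]
    exact Finset.sum_congr rfl fun j _ => by have := hle j; omega
  have hM' : ∑ j, γ' j ≤ ∑ j, γ j := Finset.sum_le_sum fun j _ => hle j
  rw [Finset.prod_mul_distrib, ← map_prod]
  rw [Finset.prod_mul_distrib, Finset.prod_mul_distrib]
  rw [prod_uu_pow, Finset.prod_pow_eq_pow_sum, Finset.prod_pow_eq_pow_sum, ww_pow]
  rw [AddMonoidAlgebra.single_mul_single, mul_assoc, AddMonoidAlgebra.single_mul_single]
  rw [← Algebra.smul_def, map_smul, Phi_single]
  simp only [one_mul, one_smul]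
  congr 1
  · rw [show (∑ i, (γ i - γ' i)) = ∑ i, γ i - ∑ i, γ' i by omega]
  · congr 1
    · congr 1
      funext i
      simp only [Prod.mk_add_mk, Pi.add_apply, Pi.zero_apply]
      ring
    · congr 1
      simp only [Prod.snd_add]
      omega
end

section
/- Let $k \le 2r$ with $k = k_0 + k_1$, $k_0, k_1 \le r$, and let $\lambda_0,\dots,\lambda_d$ be the barycentric coordinates of a $d$-simplex $K$ with vertices $V_0,\dots,V_d$. There is no polynomial $u$ of degree at most $k$ on $\mathbb{R}^d$ such that all partial derivatives of $u$ of order $\le r$ vanish at $V_0$ and all partial derivatives of $u - \lambda_0^{k_0}\lambda_1^{k_1}$ of order $\le r$ vanish at $V_1$. -/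
open MvPolynomial

lemma pderivs_append_singleton {d : ℕ} (l : List (Fin d)) (i : Fin d)
    (u : MvPolynomial (Fin d) ℝ) :
    pderivs (l ++ [i]) u = pderivs l (MvPolynomial.pderiv i u) := by
  simp [pderivs, List.foldr_append]

lemma eval_aeval_poly {d : ℕ} (f : Fin d → Polynomial ℝ) (t : ℝ)
    (q : MvPolynomial (Fin d) ℝ) :
    Polynomial.eval t (MvPolynomial.aeval f q)
      = MvPolynomial.eval (fun i => Polynomial.eval t (f i)) q := by
  induction q using MvPolynomial.induction_on with
  | C a => simp [MvPolynomial.algebraMap_eq]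
  | add p q hp hq => simp [hp, hq]
  | mul_X p i hp => simp [hp]

lemma derivative_aeval {d : ℕ} (f : Fin d → Polynomial ℝ) (c : Fin d → ℝ)
    (hf : ∀ i, Polynomial.derivative (f i) = Polynomial.C (c i))
    (q : MvPolynomial (Fin d) ℝ) :
    Polynomial.derivative (MvPolynomial.aeval f q)
      = ∑ i, Polynomial.C (c i) * MvPolynomial.aeval f (MvPolynomial.pderiv i q) := by
  induction q using MvPolynomial.induction_on with
  | C a =>
    simp [MvPolynomial.algebraMap_eq]
  | add p q hp hq =>
    simp [hp, hq, mul_add, Finset.sum_add_distrib]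
  | mul_X p i hp =>
    rw [map_mul, MvPolynomial.aeval_X, Polynomial.derivative_mul, hp, hf i]
    have : ∀ j : Fin d, Polynomial.C (c j) *
        MvPolynomial.aeval f (MvPolynomial.pderiv j (p * MvPolynomial.X i))
        = (Polynomial.C (c j) * MvPolynomial.aeval f (MvPolynomial.pderiv j p)) * f i
          + (if j = i then Polynomial.C (c j) * MvPolynomial.aeval f p else 0) := by
      intro j
      rw [MvPolynomial.pderiv_mul]
      by_cases h : j = i
      · subst h
        simp [mul_add, mul_comm, mul_assoc, mul_left_comm]
      · simp [MvPolynomial.pderiv_X_of_ne (Ne.symm h), h, mul_assoc]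
    rw [Finset.sum_congr rfl fun j _ => this j, Finset.sum_add_distrib,
      ← Finset.sum_mul, Finset.sum_ite_eq' Finset.univ i
        (fun j => Polynomial.C (c j) * MvPolynomial.aeval f p)]
    simp only [Finset.mem_univ, if_true]
    ring

lemma eval_iterate_derivative_aeval_eq_zero {d : ℕ} (f : Fin d → Polynomial ℝ)
    (c : Fin d → ℝ) (hf : ∀ i, Polynomial.derivative (f i) = Polynomial.C (c i))
    (t : ℝ) (W : Fin d → ℝ) (hW : (fun i => Polynomial.eval t (f i)) = W) :
    ∀ n (q : MvPolynomial (Fin d) ℝ),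
      (∀ l : List (Fin d), l.length ≤ n → MvPolynomial.eval W (pderivs l q) = 0) →
      Polynomial.eval t (Polynomial.derivative^[n] (MvPolynomial.aeval f q)) = 0 := by
  intro n
  induction n with
  | zero =>
    intro q hq
    have := hq [] (by simp)
    simpa [pderivs, eval_aeval_poly, hW] using this
  | succ n ih =>
    intro q hq
    rw [Function.iterate_succ_apply, derivative_aeval f c hf q,
      Polynomial.iterate_derivative_sum, Polynomial.eval_finset_sum]
    apply Finset.sum_eq_zero
    intro i _
    rw [Polynomial.iterate_derivative_C_mul, Polynomial.eval_mul]
    have : Polynomial.eval t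
        (Polynomial.derivative^[n] (MvPolynomial.aeval f (MvPolynomial.pderiv i q))) = 0 := by
      apply ih
      intro l hl
      rw [← pderivs_append_singleton]
      exact hq (l ++ [i]) (by simpa using Nat.succ_le_succ hl)
    rw [this, mul_zero]

lemma natDegree_aeval_le {d : ℕ} (f : Fin d → Polynomial ℝ)
    (hf : ∀ i, (f i).natDegree ≤ 1) (q : MvPolynomial (Fin d) ℝ) :
    (MvPolynomial.aeval f q).natDegree ≤ q.totalDegree := by
  conv_lhs => rw [q.as_sum]
  rw [map_sum]
  apply Polynomial.natDegree_sum_le_of_forall_le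
  intro m hm
  rw [MvPolynomial.aeval_monomial]
  apply Polynomial.natDegree_mul_le.trans
  have h1 : (algebraMap ℝ (Polynomial ℝ) (MvPolynomial.coeff m q)).natDegree = 0 := by
    simp [Polynomial.algebraMap_eq]
  rw [h1, zero_add]
  have h2 : (m.prod fun i k => f i ^ k).natDegree ≤ ∑ i ∈ m.support, m i := by
    refine Polynomial.natDegree_prod_le _ _ |>.trans ?_
    apply Finset.sum_le_sum
    intro i _
    calc (f i ^ m i).natDegree ≤ m i * (f i).natDegree := Polynomial.natDegree_pow_le
      _ ≤ m i * 1 := Nat.mul_le_mul_left _ (hf i)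
      _ = m i := Nat.mul_one _
  exact h2.trans (MvPolynomial.le_totalDegree hm)

/-- with `k = k₀ + k₁ ≤ 2r`, there is no polynomial `u` of degree `≤ k` whose
derivatives of order `≤ r` all vanish at `V₀` while those of `u - λ₀^{k₀} λ₁^{k₁}`
all vanish at `V₁`. -/
theorem stmt6 (d k r k0 k1 : ℕ) (hd : 1 ≤ d)
    (hk : k = k0 + k1) (hk0 : k0 ≤ r) (hk1 : k1 ≤ r)
    (V : Fin (d + 1) → (Fin d → ℝ)) (hV : AffineIndependent ℝ V)
    (lam : Fin (d + 1) → MvPolynomial (Fin d) ℝ)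
    (hdeg : ∀ i, (lam i).totalDegree ≤ 1)
    (hval : ∀ i j, MvPolynomial.eval (V j) (lam i) = if i = j then 1 else 0)
    (hsum : ∑ i, lam i = 1) :
    ¬ ∃ u : MvPolynomial (Fin d) ℝ, u.totalDegree ≤ k ∧
      (∀ l : List (Fin d), l.length ≤ r →
        MvPolynomial.eval (V 0) (pderivs l u) = 0) ∧
      (∀ l : List (Fin d), l.length ≤ r →
        MvPolynomial.eval (V ⟨1, by omega⟩)
          (pderivs l (u - lam 0 ^ k0 * lam ⟨1, by omega⟩ ^ k1)) = 0) := by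
  rintro ⟨u, hu, h0, h1⟩
  set i1 : Fin (d + 1) := ⟨1, by omega⟩ with hi1
  set f : Fin d → Polynomial ℝ :=
    fun i => Polynomial.C (V 0 i) + Polynomial.X * Polynomial.C (V i1 i - V 0 i) with hfdef
  set c : Fin d → ℝ := fun i => V i1 i - V 0 i with hcdef
  have hf : ∀ i, Polynomial.derivative (f i) = Polynomial.C (c i) := by
    intro i; simp [hfdef, hcdef]
  have hf1 : ∀ i, (f i).natDegree ≤ 1 := by
    intro i
    refine Polynomial.natDegree_add_le_of_degree_le (by simp) ?_
    refine Polynomial.natDegree_mul_le.trans (by simp)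
  have hW0 : (fun i => Polynomial.eval 0 (f i)) = V 0 := by
    funext i; simp [hfdef]
  have hW1 : (fun i => Polynomial.eval 1 (f i)) = V i1 := by
    funext i; simp [hfdef]
  -- images of the barycentric coordinates
  have hlam_eq : ∀ (j : Fin (d + 1)) (a b : ℝ),
      MvPolynomial.eval (V 0) (lam j) = a → MvPolynomial.eval (V i1) (lam j) = b →
      MvPolynomial.aeval f (lam j) = Polynomial.C (b - a) * Polynomial.X + Polynomial.C a := by
    intro j a b ha hb
    set L := MvPolynomial.aeval f (lam j) with hL
    have hdL : L.natDegree ≤ 1 := (natDegree_aeval_le f hf1 _).trans (hdeg j)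
    have hrep := Polynomial.eq_X_add_C_of_natDegree_le_one hdL
    have he0 : Polynomial.eval 0 L = a := by
      rw [hL, eval_aeval_poly, hW0, ha]
    have he1 : Polynomial.eval 1 L = b := by
      rw [hL, eval_aeval_poly, hW1, hb]
    have hc0 : L.coeff 0 = a := by
      rw [hrep] at he0; simpa using he0
    have hc1 : L.coeff 1 = b - a := by
      rw [hrep] at he1; simp at he1; linarith
    rw [hrep, hc0, hc1]
  have h01 : (0 : Fin (d + 1)) ≠ i1 := by
    intro h
    have := congrArg Fin.val h
    simp [hi1] at this
  have hL0 : MvPolynomial.aeval f (lam 0) = 1 - Polynomial.X := by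
    have := hlam_eq 0 1 0 (by rw [hval]; simp) (by rw [hval]; simp [h01])
    rw [this]
    simp
    ring
  have hL1 : MvPolynomial.aeval f (lam i1) = Polynomial.X := by
    have := hlam_eq i1 0 1 (by rw [hval]; simp [Ne.symm h01]) (by rw [hval]; simp)
    rw [this]
    simp
  set g : Polynomial ℝ := MvPolynomial.aeval f u with hg
  set p : Polynomial ℝ := (1 - Polynomial.X) ^ k0 * Polynomial.X ^ k1 with hp
  have hgdeg : g.natDegree ≤ k := (natDegree_aeval_le f hf1 u).trans hu
  have himg : MvPolynomial.aeval f (u - lam 0 ^ k0 * lam i1 ^ k1) = g - p := by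
    rw [map_sub, map_mul, map_pow, map_pow, hL0, hL1]
  -- derivative vanishing
  have hg0 : ∀ m ≤ r, (Polynomial.derivative^[m] g).IsRoot 0 := by
    intro m hm
    exact eval_iterate_derivative_aeval_eq_zero f c hf 0 (V 0) hW0 m u
      (fun l hl => h0 l (hl.trans hm))
  have hg1 : ∀ m ≤ r, (Polynomial.derivative^[m] (g - p)).IsRoot 1 := by
    intro m hm
    rw [← himg]
    exact eval_iterate_derivative_aeval_eq_zero f c hf 1 (V i1) hW1 m _
      (fun l hl => h1 l (hl.trans hm))
  -- multiplicity of p at 1 is exactly k0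
  have hpfact : p = (Polynomial.X - Polynomial.C 1) ^ k0
      * ((-1 : Polynomial ℝ) ^ k0 * Polynomial.X ^ k1) := by
    have hbase : (1 - Polynomial.X : Polynomial ℝ)
        = (Polynomial.X - Polynomial.C 1) * (-1) := by
      rw [Polynomial.C_1]; ring
    rw [hp, hbase, mul_pow]; ring
  have hqne : ((-1 : Polynomial ℝ) ^ k0 * Polynomial.X ^ k1) ≠ 0 := by
    apply mul_ne_zero
    · exact pow_ne_zero _ (by norm_num)
    · exact pow_ne_zero _ Polynomial.X_ne_zero
  have hpne : p ≠ 0 := by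
    rw [hpfact]
    exact mul_ne_zero (pow_ne_zero _ (Polynomial.X_sub_C_ne_zero 1)) hqne
  have hpmult : p.rootMultiplicity 1 = k0 := by
    rw [hpfact, Polynomial.rootMultiplicity_mul (by rw [← hpfact]; exact hpne),
      Polynomial.rootMultiplicity_X_sub_C_pow,
      Polynomial.rootMultiplicity_eq_zero (by simp [Polynomial.IsRoot])]
    omega
  have hfac_nzd : ∀ n : ℕ, ((n.factorial : ℝ)) ∈ nonZeroDivisors ℝ :=
    fun n => mem_nonZeroDivisors_of_ne_zero (by exact_mod_cast n.factorial_ne_zero)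
  have hpj : ∀ j < k0, (Polynomial.derivative^[j] p).IsRoot 1 := by
    intro j hj
    exact Polynomial.isRoot_iterate_derivative_of_lt_rootMultiplicity (by rw [hpmult]; exact hj)
  have hpk0 : ¬ (Polynomial.derivative^[k0] p).IsRoot 1 := by
    intro h
    have : k0 < p.rootMultiplicity 1 := by
      rw [Polynomial.lt_rootMultiplicity_iff_isRoot_iterate_derivative_of_mem_nonZeroDivisors
        hpne (hfac_nzd k0)]
      intro m hm
      rcases lt_or_eq_of_le hm with hm' | hm'
      · exact hpj m hm'
      · rw [hm']; exact h
    omega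
  have hgk0 : ¬ (Polynomial.derivative^[k0] g).IsRoot 1 := by
    intro h
    apply hpk0
    have hsub := hg1 k0 hk0
    rw [Polynomial.iterate_derivative_sub] at hsub
    have : Polynomial.eval 1 (Polynomial.derivative^[k0] g)
        - Polynomial.eval 1 (Polynomial.derivative^[k0] p) = 0 := by
      simpa [Polynomial.IsRoot] using hsub
    have h' : Polynomial.eval 1 (Polynomial.derivative^[k0] g) = 0 := h
    simpa [Polynomial.IsRoot, h'] using this.symm
  have hgne : g ≠ 0 := by
    intro h
    exact hgk0 (by simp [h, Polynomial.IsRoot])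
  have m0 : r < g.rootMultiplicity 0 := by
    rw [Polynomial.lt_rootMultiplicity_iff_isRoot_iterate_derivative_of_mem_nonZeroDivisors
      hgne (hfac_nzd r)]
    exact hg0
  have m1 : k0 ≤ g.rootMultiplicity 1 := by
    rcases Nat.eq_zero_or_pos k0 with h | h
    · omega
    · have hlt : k0 - 1 < g.rootMultiplicity 1 := by
        rw [Polynomial.lt_rootMultiplicity_iff_isRoot_iterate_derivative_of_mem_nonZeroDivisors
          hgne (hfac_nzd (k0 - 1))]
        intro m hm
        have hmk0 : m < k0 := by omega
        have hsub := hg1 m (by omega)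
        rw [Polynomial.iterate_derivative_sub] at hsub
        have hp0 := hpj m hmk0
        have : Polynomial.eval 1 (Polynomial.derivative^[m] g)
            - Polynomial.eval 1 (Polynomial.derivative^[m] p) = 0 := by
          simpa [Polynomial.IsRoot] using hsub
        have hp0' : Polynomial.eval 1 (Polynomial.derivative^[m] p) = 0 := hp0
        simpa [Polynomial.IsRoot, hp0'] using this
      omega
  have dvd0 : (Polynomial.X - Polynomial.C (0 : ℝ)) ^ (r + 1) ∣ g :=
    dvd_trans (pow_dvd_pow _ m0) (g.pow_rootMultiplicity_dvd 0)
  have dvd1 : (Polynomial.X - Polynomial.C (1 : ℝ)) ^ k0 ∣ g :=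
    dvd_trans (pow_dvd_pow _ m1) (g.pow_rootMultiplicity_dvd 1)
  have hcop : IsCoprime (Polynomial.X - Polynomial.C (0 : ℝ))
      (Polynomial.X - Polynomial.C 1) := ⟨1, -1, by simp⟩
  have hdvd := (hcop.pow).mul_dvd dvd0 dvd1
  have hdegle := Polynomial.natDegree_le_of_dvd hdvd hgne
  rw [Polynomial.natDegree_mul (pow_ne_zero _ (Polynomial.X_sub_C_ne_zero 0))
      (pow_ne_zero _ (Polynomial.X_sub_C_ne_zero 1)),
    Polynomial.natDegree_pow, Polynomial.natDegree_pow,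
    Polynomial.natDegree_X_sub_C, Polynomial.natDegree_X_sub_C] at hdegle
  omega
end

section
/- Let $d \ge 2$, let $2 \le s \le d$, and let $0 \le r_1 \le \cdots \le r_d$ be integers with $r_t \ge 2r_{t-1}$ for all $t = s+1, \dots, d$ and $r_s \le 2r_{s-1} - 1$. Set $\overline{r} = r_s - r_{s-1} + 1$ and define $v(x) = x_{s-1}^{r_{s-1}} x_s^{\overline{r}} \prod_{i=s+1}^d x_i^{r_i - r_{i-1}} \cdot (1 - \sum_{i=s+1}^d x_i)^{r_d - r_s}$. Then for every subset $E$ of the face $F = \{x : x_1 = \cdots = x_s = 0, \sum_{i > s} x_i \le 1, x_i \ge 0\}$ that is the convex hull of $V_0 = 0$ together with unit vectors $e_{i}$ for $i$ in some subset $I \subseteq \{s+1,\dots,d\}$ with $|I| = d - t$, all partial derivatives of $v$ of order at most $r_t$ vanish identically on $E$. -/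
open MvPolynomial

lemma aux_pderiv_mem {d : ℕ} (J : Ideal (MvPolynomial (Fin d) ℝ)) (i : Fin d) :
    ∀ m, ∀ u ∈ J ^ (m + 1), pderiv i u ∈ J ^ m := by
  intro m
  induction m with
  | zero => intro u _; simp [Ideal.one_eq_top]
  | succ m ih =>
    intro u hu
    rw [pow_succ] at hu
    refine Submodule.mul_induction_on hu ?_ ?_
    · intro a ha b hb
      rw [pderiv_mul]
      refine Ideal.add_mem _ ?_ ?_
      · rw [pow_succ]
        exact Ideal.mul_mem_mul (ih a ha) hb
      · exact Ideal.mul_mem_right _ _ ha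
    · intro p q hp hq
      rw [map_add]
      exact Ideal.add_mem _ hp hq

lemma aux_pderivs_mem {d : ℕ} (J : Ideal (MvPolynomial (Fin d) ℝ)) :
    ∀ (l : List (Fin d)) (n : ℕ) (u : MvPolynomial (Fin d) ℝ),
      u ∈ J ^ (n + l.length) → pderivs l u ∈ J ^ n := by
  intro l
  induction l with
  | nil => intro n u hu; simpa [pderivs] using hu
  | cons i l ih =>
    intro n u hu
    have h1 : pderivs (i :: l) u = pderiv i (pderivs l u) := rfl
    rw [h1]
    refine aux_pderiv_mem J i n _ (ih (n + 1) u ?_)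
    have : n + 1 + l.length = n + (i :: l).length := by simp; omega
    rwa [this]

lemma aux_prod_mem {d : ℕ} (J : Ideal (MvPolynomial (Fin d) ℝ)) (S : Finset (Fin d))
    (k : Fin d → ℕ) (hf : ∀ j ∈ S, (X j : MvPolynomial (Fin d) ℝ) ∈ J) :
    (∏ j ∈ S, (X j : MvPolynomial (Fin d) ℝ) ^ k j) ∈ J ^ (∑ j ∈ S, k j) := by
  induction S using Finset.induction with
  | empty => simp [Ideal.one_eq_top]
  | @insert a s hnotmem ih =>
    rw [Finset.prod_insert hnotmem, Finset.sum_insert hnotmem, pow_add]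
    exact Ideal.mul_mem_mul (Ideal.pow_mem_pow (hf a (Finset.mem_insert_self a s)) _)
      (ih fun j hj => hf j (Finset.mem_insert_of_mem hj))

lemma aux_w_mono (r : ℕ → ℕ) (s d : ℕ)
    (hgrow : ∀ t', s + 1 ≤ t' → t' ≤ d → 2 * r (t' - 1) ≤ r t') :
    ∀ a b, s + 1 ≤ a → a ≤ b → b ≤ d → r a - r (a - 1) ≤ r b - r (b - 1) := by
  intro a b ha hab
  induction b, hab using Nat.le_induction with
  | base => intro _; exact le_rfl
  | succ m hm ih =>
    intro hmd
    have h1 := ih (by omega)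
    have h2 := hgrow (m + 1) (by omega) hmd
    have h3 : m + 1 - 1 = m := by omega
    rw [h3] at h2
    show r a - r (a - 1) ≤ r (m + 1) - r (m + 1 - 1)
    rw [h3]
    omega

lemma aux_key (r : ℕ → ℕ) (s d : ℕ)
    (hgrow : ∀ t', s + 1 ≤ t' → t' ≤ d → 2 * r (t' - 1) ≤ r t') :
    ∀ n (C : Finset ℕ), C ⊆ Finset.Icc (s + 1) d → C.card = n →
      r (s + n) ≤ r s + ∑ i ∈ C, (r i - r (i - 1)) := by
  intro n
  induction n with
  | zero =>
    intro C _ hc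
    rw [Finset.card_eq_zero] at hc
    simp [hc]
  | succ n ih =>
    intro C hCsub hc
    have hne : C.Nonempty := Finset.card_pos.mp (by omega)
    set M := C.max' hne with hM
    have hMC : M ∈ C := C.max'_mem hne
    have hMIcc := hCsub hMC
    rw [Finset.mem_Icc] at hMIcc
    have hCsub' : C ⊆ Finset.Icc (s + 1) M := by
      intro i hi
      have := hCsub hi
      rw [Finset.mem_Icc] at this ⊢
      exact ⟨this.1, C.le_max' i hi⟩
    have hcard_le : C.card ≤ (Finset.Icc (s + 1) M).card := Finset.card_le_card hCsub'
    rw [Nat.card_Icc] at hcard_le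
    have hMge : s + n + 1 ≤ M := by omega
    have hC' : (C.erase M).card = n := by rw [Finset.card_erase_of_mem hMC]; omega
    have hIH := ih (C.erase M) (fun i hi => hCsub (Finset.erase_subset _ _ hi)) hC'
    have hsum : ∑ i ∈ C.erase M, (r i - r (i - 1)) + (r M - r (M - 1)) =
        ∑ i ∈ C, (r i - r (i - 1)) := Finset.sum_erase_add C (fun i => r i - r (i - 1)) hMC
    have hw := aux_w_mono r s d hgrow (s + n + 1) M (by omega) hMge hMIcc.2
    have h3 : s + n + 1 - 1 = s + n := by omega
    rw [h3] at hw
    show r (s + n + 1) ≤ r s + ∑ i ∈ C, (r i - r (i - 1))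
    omega

/-- The polynomial
`v = x_{s-1}^{r_{s-1}} x_s^{r̄} ∏_{i=s+1}^d x_i^{r_i - r_{i-1}} (1 - ∑_{i>s} x_i)^{r_d - r_s}`
(variables indexed by 1-based positions). -/
noncomputable def vPoly (d s : ℕ) (r : ℕ → ℕ) : MvPolynomial (Fin d) ℝ :=
  (∏ j : Fin d, MvPolynomial.X j ^
      (if (j : ℕ) + 1 = s - 1 then r (s - 1)
       else if (j : ℕ) + 1 = s then r s - r (s - 1) + 1
       else if s ≤ (j : ℕ) then r ((j : ℕ) + 1) - r (j : ℕ) else 0)) *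
    (1 - ∑ j ∈ Finset.univ.filter (fun j : Fin d => s ≤ (j : ℕ)), MvPolynomial.X j)
      ^ (r d - r s)

/-- on every face `E = conv({0} ∪ {eᵢ : i ∈ I})`, `I ⊆ {s+1,…,d}`,
`|I| = d - t`, all partial derivatives of `v` of order at most `r t` vanish identically. -/
theorem stmt11 (d s t : ℕ) (r : ℕ → ℕ) (hd : 2 ≤ d) (hs2 : 2 ≤ s) (hsd : s ≤ d)
    (hmono : ∀ i, 1 ≤ i → i < d → r i ≤ r (i + 1))
    (hgrow : ∀ t', s + 1 ≤ t' → t' ≤ d → 2 * r (t' - 1) ≤ r t')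
    (hrs : r s + 1 ≤ 2 * r (s - 1))
    (I : Finset ℕ) (hI : I ⊆ Finset.Icc (s + 1) d) (hcard : I.card = d - t)
    (hts : s ≤ t) (htd : t ≤ d) :
    ∀ x ∈ convexHull ℝ (insert (0 : Fin d → ℝ)
        {y | ∃ i ∈ I, y = fun j : Fin d => if (j : ℕ) + 1 = i then (1 : ℝ) else 0}),
      ∀ l : List (Fin d), l.length ≤ r t →
        MvPolynomial.eval x (pderivs l (vPoly d s r)) = 0 := by
  intro x hx l hl
  classical
  set J : Ideal (MvPolynomial (Fin d) ℝ) := RingHom.ker (eval x) with hJ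
  -- all coordinates outside I vanish on the hull
  have hvan : ∀ j : Fin d, ((j : ℕ) + 1 ∉ I) → x j = 0 := by
    set V : Set (Fin d → ℝ) := {y | ∀ j : Fin d, ((j : ℕ) + 1 ∉ I) → y j = 0} with hV
    have hconv : Convex ℝ V := by
      intro y hy z hz a b ha hb hab
      intro j hj
      simp only [Pi.add_apply, Pi.smul_apply, smul_eq_mul, hy j hj, hz j hj, mul_zero, add_zero]
    have hbase : insert (0 : Fin d → ℝ)
        {y | ∃ i ∈ I, y = fun j : Fin d => if (j : ℕ) + 1 = i then (1 : ℝ) else 0} ⊆ V := by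
      intro y hy
      rcases hy with rfl | ⟨i, hiI, rfl⟩
      · intro j _; rfl
      · intro j hj
        have : (j : ℕ) + 1 ≠ i := fun h => hj (h ▸ hiI)
        simp [this]
    exact convexHull_min hbase hconv hx
  -- the exponent function
  set k : Fin d → ℕ := fun j =>
      (if (j : ℕ) + 1 = s - 1 then r (s - 1)
       else if (j : ℕ) + 1 = s then r s - r (s - 1) + 1
       else if s ≤ (j : ℕ) then r ((j : ℕ) + 1) - r (j : ℕ) else 0) with hk
  set S : Finset (Fin d) := Finset.univ.filter (fun j : Fin d => (j : ℕ) + 1 ∉ I) with hS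
  set N : ℕ := ∑ j ∈ S, k j with hN
  -- v ∈ J ^ N
  have hXJ : ∀ j ∈ S, (X j : MvPolynomial (Fin d) ℝ) ∈ J := by
    intro j hj
    rw [hJ, RingHom.mem_ker, eval_X]
    exact hvan j (by simpa [hS] using hj)
  have hPmem : (∏ j ∈ S, (X j : MvPolynomial (Fin d) ℝ) ^ k j) ∈ J ^ N :=
    aux_prod_mem J S k hXJ
  have hvmem : vPoly d s r ∈ J ^ N := by
    have hsplit : (∏ j : Fin d, (X j : MvPolynomial (Fin d) ℝ) ^ k j) =
        (∏ j ∈ S, (X j : MvPolynomial (Fin d) ℝ) ^ k j) *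
        (∏ j ∈ Finset.univ.filter (fun j : Fin d => ¬ ((j : ℕ) + 1 ∉ I)),
          (X j : MvPolynomial (Fin d) ℝ) ^ k j) :=
      (Finset.prod_filter_mul_prod_filter_not Finset.univ _ _).symm
    have : vPoly d s r = (∏ j ∈ S, (X j : MvPolynomial (Fin d) ℝ) ^ k j) *
        ((∏ j ∈ Finset.univ.filter (fun j : Fin d => ¬ ((j : ℕ) + 1 ∉ I)),
          (X j : MvPolynomial (Fin d) ℝ) ^ k j) *
        (1 - ∑ j ∈ Finset.univ.filter (fun j : Fin d => s ≤ (j : ℕ)), X j) ^ (r d - r s)) := by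
      rw [vPoly, ← mul_assoc, ← hsplit, hk]
    rw [this]
    exact Ideal.mul_mem_right _ _ hPmem
  -- the counting bound: N ≥ r t + 1
  have hNge : r t + 1 ≤ N := by
    set C : Finset ℕ := Finset.Icc (s + 1) d \ I with hC
    have hCcard : C.card = t - s := by
      rw [hC, Finset.card_sdiff_of_subset hI, Nat.card_Icc, hcard]
      omega
    have hkey := aux_key r s d hgrow (t - s) C Finset.sdiff_subset hCcard
    have hst : s + (t - s) = t := by omega
    rw [hst] at hkey
    -- the two special indices
    have hs2d : s - 2 < d := by omega
    have hs1d : s - 1 < d := by omega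
    set j₁ : Fin d := ⟨s - 2, hs2d⟩ with hj₁
    set j₂ : Fin d := ⟨s - 1, hs1d⟩ with hj₂
    have hj₁S : j₁ ∈ S := by
      simp only [hS, Finset.mem_filter, Finset.mem_univ, true_and]
      intro hmem
      have := Finset.mem_Icc.mp (hI hmem)
      have hv : ((⟨s - 2, hs2d⟩ : Fin d) : ℕ) = s - 2 := rfl
      have hv' : (j₁ : ℕ) = s - 2 := rfl
      omega
    have hj₂S : j₂ ∈ S := by
      simp only [hS, Finset.mem_filter, Finset.mem_univ, true_and]
      intro hmem
      have := Finset.mem_Icc.mp (hI hmem)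
      have hv : ((⟨s - 1, hs1d⟩ : Fin d) : ℕ) = s - 1 := rfl
      have hv' : (j₂ : ℕ) = s - 1 := rfl
      omega
    set S' : Finset (Fin d) := S.filter (fun j => s ≤ (j : ℕ)) with hS'
    have hj₂notS' : j₂ ∉ S' := by
      simp only [hS', Finset.mem_filter]
      rintro ⟨-, h⟩
      have h2 : s ≤ s - 1 := h
      omega
    have hj₁not : j₁ ∉ insert j₂ S' := by
      simp only [Finset.mem_insert]
      rintro (h | h)
      · have h3 : s - 2 = s - 1 := congrArg Fin.val h
        omega
      · simp only [hS', Finset.mem_filter] at h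
        have h4 : s ≤ s - 2 := h.2
        omega
    have hsub : insert j₁ (insert j₂ S') ⊆ S := by
      intro j hj
      rcases Finset.mem_insert.mp hj with rfl | hj
      · exact hj₁S
      rcases Finset.mem_insert.mp hj with rfl | hj
      · exact hj₂S
      · exact Finset.filter_subset _ _ hj
    have hle : ∑ j ∈ insert j₁ (insert j₂ S'), k j ≤ N :=
      Finset.sum_le_sum_of_subset hsub
    rw [Finset.sum_insert hj₁not, Finset.sum_insert hj₂notS'] at hle
    have hkj₁ : k j₁ = r (s - 1) := by
      rw [hk]
      simp only [hj₁]
      rw [if_pos (by omega)]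
    have hkj₂ : k j₂ = r s - r (s - 1) + 1 := by
      rw [hk]
      simp only [hj₂]
      rw [if_neg (by omega), if_pos (by omega)]
    -- sum over S' equals sum over C
    have hsum' : ∑ j ∈ S', k j = ∑ i ∈ C, (r i - r (i - 1)) := by
      refine Finset.sum_bij (fun j _ => (j : ℕ) + 1) ?_ ?_ ?_ ?_
      · intro j hj
        simp only [hS', hS, Finset.mem_filter, Finset.mem_univ, true_and] at hj
        simp only [hC, Finset.mem_sdiff, Finset.mem_Icc]
        exact ⟨⟨by omega, by omega⟩, hj.1⟩
      · intro a _ b _ hab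
        have h : (a : ℕ) + 1 = (b : ℕ) + 1 := hab
        exact Fin.ext (by omega)
      · intro i hi
        simp only [hC, Finset.mem_sdiff, Finset.mem_Icc] at hi
        have hid : i - 1 < d := by omega
        refine ⟨⟨i - 1, hid⟩, ?_, show i - 1 + 1 = i by omega⟩
        simp only [hS', hS, Finset.mem_filter, Finset.mem_univ, true_and]
        constructor
        · show i - 1 + 1 ∉ I
          have : i - 1 + 1 = i := by omega
          rw [this]; exact hi.2
        · show s ≤ i - 1
          omega
      · intro j hj
        simp only [hS', hS, Finset.mem_filter, Finset.mem_univ, true_and] at hj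
        show (if (j : ℕ) + 1 = s - 1 then r (s - 1)
          else if (j : ℕ) + 1 = s then r s - r (s - 1) + 1
          else if s ≤ (j : ℕ) then r ((j : ℕ) + 1) - r (j : ℕ) else 0) =
          r ((j : ℕ) + 1) - r ((j : ℕ) + 1 - 1)
        rw [if_neg (by omega), if_neg (by omega), if_pos hj.2]
        have h2 : (j : ℕ) + 1 - 1 = (j : ℕ) := by omega
        rw [h2]
    rw [hkj₁, hkj₂, hsum'] at hle
    omega
  -- conclude
  have hvmem' : vPoly d s r ∈ J ^ (1 + l.length) :=
    Ideal.pow_le_pow_right (by omega) hvmem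
  have := aux_pderivs_mem J l 1 _ hvmem'
  rw [pow_one] at this
  exact RingHom.mem_ker.mp this
end
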